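/- Given positive reals α_0, α_1, α_2, α_3 with the pairing property: α_k = 0.5/(ε + D_k)^β where ε = K h², β ≥ 1, and D_0, D_2 agree up to O(h^4) (as do D_1, D_3) with all D_k = O(h²), define δ = (α_0 + α_2)/(Σ α_k) and ω_k = α_k/(Σ α_j). Then ω_0/δ = 1/2 + O(h²), ω_2/δ = 1/2 + O(h²), ω_1/(1-δ) = 1/2 + O(h²), and ω_3/(1-δ) = 1/2 + O(h²). -/

import Mathlib

lemma aux_rpow_mvt (β u v : ℝ) (hu : 0 < u) (huv : u ≤ v) (hβ : 1 ≤ β) :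
    v ^ β - u ^ β ≤ β * v ^ (β - 1) * (v - u) := by
  rcases eq_or_lt_of_le huv with rfl | hlt
  · simp
  have hv : 0 < v := hu.trans hlt
  have hdiff : ∀ x ∈ Set.Ioo u v, HasDerivAt (fun t : ℝ => t ^ β) (β * x ^ (β - 1)) x := by
    intro x hx
    exact Real.hasDerivAt_rpow_const (Or.inl (hu.trans hx.1).ne')
  have hcont : ContinuousOn (fun t : ℝ => t ^ β) (Set.Icc u v) := by
    intro x hx
    exact (Real.continuousAt_rpow_const x β (Or.inl (hu.trans_le hx.1).ne')).continuousWithinAt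
  obtain ⟨c, hc, hceq⟩ := exists_hasDerivAt_eq_slope (fun t : ℝ => t ^ β)
    (fun x => β * x ^ (β - 1)) hlt hcont hdiff
  have hcpos : 0 < c := hu.trans hc.1
  have hne : v - u ≠ 0 := sub_ne_zero.mpr hlt.ne'
  have heq : v ^ β - u ^ β = β * c ^ (β - 1) * (v - u) := by
    field_simp at hceq; linarith [hceq]
  rw [heq]
  have hcle : c ^ (β - 1) ≤ v ^ (β - 1) :=
    Real.rpow_le_rpow hcpos.le hc.2.le (by linarith)
  have hbpos : (0:ℝ) ≤ β := by linarith
  exact mul_le_mul_of_nonneg_right (mul_le_mul_of_nonneg_left hcle hbpos)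
    (sub_nonneg.mpr hlt.le)

lemma aux_rpow_abs (β c x y : ℝ) (hx : 0 < x) (hy : 0 < y) (hxc : x ≤ c) (hyc : y ≤ c)
    (hβ : 1 ≤ β) : |x ^ β - y ^ β| ≤ β * c ^ (β - 1) * |x - y| := by
  have hc : 0 < c := hx.trans_le hxc
  have hbpos : (0:ℝ) ≤ β := by linarith
  rcases le_total x y with hxy | hxy
  · rw [abs_sub_comm, abs_sub_comm x y, abs_of_nonneg (sub_nonneg.mpr hxy),
      abs_of_nonneg (sub_nonneg.mpr (Real.rpow_le_rpow hx.le hxy (by linarith)))]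
    calc y ^ β - x ^ β ≤ β * y ^ (β-1) * (y - x) := aux_rpow_mvt β x y hx hxy hβ
      _ ≤ β * c ^ (β-1) * (y - x) :=
        mul_le_mul_of_nonneg_right (mul_le_mul_of_nonneg_left
          (Real.rpow_le_rpow hy.le hyc (by linarith)) hbpos) (sub_nonneg.mpr hxy)
  · rw [abs_of_nonneg (sub_nonneg.mpr hxy),
      abs_of_nonneg (sub_nonneg.mpr (Real.rpow_le_rpow hy.le hxy (by linarith)))]
    calc x ^ β - y ^ β ≤ β * x ^ (β-1) * (x - y) := aux_rpow_mvt β y x hy hxy hβ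
      _ ≤ β * c ^ (β-1) * (x - y) :=
        mul_le_mul_of_nonneg_right (mul_le_mul_of_nonneg_left
          (Real.rpow_le_rpow hx.le hxc (by linarith)) hbpos) (sub_nonneg.mpr hxy)

lemma aux_key (K A B β h d e : ℝ) (hK : 0 < K) (hβ : 1 ≤ β) (hA : 0 ≤ A) (hB : 0 ≤ B)
    (hh : 0 < h) (hd : 0 ≤ d) (he : 0 ≤ e)
    (hde : |d - e| ≤ A * h ^ 4) (hdB : d ≤ B * h ^ 2) (heB : e ≤ B * h ^ 2) :
    |(1/2) / (K*h^2 + d)^β / ((1/2)/(K*h^2 + d)^β + (1/2)/(K*h^2 + e)^β) - 1/2|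
      ≤ (β * A * (K+B)^(β-1) / (4 * K^β)) * h^2 := by
  have hs : (0:ℝ) < h^2 := by positivity
  set s := h^2 with hsdef
  have hx : (0:ℝ) < K*s + d := by positivity
  have hy : (0:ℝ) < K*s + e := by positivity
  set x := K*s + d
  set y := K*s + e
  have hX : (0:ℝ) < x ^ β := Real.rpow_pos_of_pos hx β
  have hY : (0:ℝ) < y ^ β := Real.rpow_pos_of_pos hy β
  have e1 : (1/2) / x^β / ((1/2)/x^β + (1/2)/y^β) - 1/2 = (y^β - x^β) / (2*(x^β + y^β)) := by
    field_simp
    ring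
  rw [e1, abs_div, abs_of_pos (by positivity : (0:ℝ) < 2*(x^β+y^β))]
  -- numerator bound
  have hxc : x ≤ (K+B)*s := by simp only [x]; nlinarith
  have hyc : y ≤ (K+B)*s := by simp only [y]; nlinarith
  have hnum : |y^β - x^β| ≤ β * ((K+B)*s)^(β-1) * (A * s^2) := by
    calc |y^β - x^β| ≤ β * ((K+B)*s)^(β-1) * |y - x| :=
          aux_rpow_abs β ((K+B)*s) y x hy hx hyc hxc hβ
      _ ≤ β * ((K+B)*s)^(β-1) * (A * s^2) := by
          apply mul_le_mul_of_nonneg_left _ (by positivity)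
          have hyx : y - x = e - d := by simp only [x, y]; ring
          rw [hyx, abs_sub_comm]
          calc |d - e| ≤ A * h^4 := hde
            _ = A * s^2 := by rw [hsdef]; ring
  -- denominator bound
  have hxb : (K*s)^β ≤ x^β := Real.rpow_le_rpow (by positivity) (by simp [x]; positivity) (by linarith)
  have hyb : (K*s)^β ≤ y^β := Real.rpow_le_rpow (by positivity) (by simp [y]; positivity) (by linarith)
  have hKs : (0:ℝ) < (K*s)^β := Real.rpow_pos_of_pos (by positivity) β
  have hden : 4*(K*s)^β ≤ 2*(x^β + y^β) := by linarith
  have step : |y^β - x^β| / (2*(x^β+y^β)) ≤ (β * ((K+B)*s)^(β-1) * (A*s^2)) / (4*(K*s)^β) :=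
    div_le_div₀ (by positivity) hnum (by positivity) hden
  refine step.trans (le_of_eq ?_)
  -- algebraic identity
  rw [Real.mul_rpow (by positivity) hs.le, Real.mul_rpow hK.le hs.le]
  have hs1 : s ^ (β-1) * s^2 = s^β * s := by
    rw [← Real.rpow_natCast s 2, ← Real.rpow_add hs, ← Real.rpow_add_one hs.ne' β]
    congr 1
    ring
  have hsb : (0:ℝ) < s ^ β := Real.rpow_pos_of_pos hs β
  have hKb : (0:ℝ) < K ^ β := Real.rpow_pos_of_pos hK β
  rw [div_mul_eq_mul_div, div_eq_div_iff (by positivity) (by positivity)]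
  linear_combination (4 * β * A * (K+B)^(β-1) * K^β) * hs1

theorem stmt14 (K A B β : ℝ) (hK : 0 < K) (hβ : 1 ≤ β) (hA : 0 ≤ A) (hB : 0 ≤ B)
    (D : Fin 4 → ℝ → ℝ)
    (hDnn : ∀ (k : Fin 4) (h : ℝ), 0 < h → 0 ≤ D k h)
    (h02 : ∀ h : ℝ, 0 < h → h < 1 → |D 0 h - D 2 h| ≤ A * h ^ 4)
    (h13 : ∀ h : ℝ, 0 < h → h < 1 → |D 1 h - D 3 h| ≤ A * h ^ 4)
    (hall : ∀ (k : Fin 4) (h : ℝ), 0 < h → h < 1 → D k h ≤ B * h ^ 2) :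
    ∃ M h0 : ℝ, 0 < h0 ∧ ∀ h : ℝ, 0 < h → h < h0 →
      let α : Fin 4 → ℝ := fun k => (1 / 2) / (K * h ^ 2 + D k h) ^ β
      let T : ℝ := α 0 + α 1 + α 2 + α 3
      let δ : ℝ := (α 0 + α 2) / T
      |(α 0 / T) / δ - 1 / 2| ≤ M * h ^ 2 ∧
      |(α 2 / T) / δ - 1 / 2| ≤ M * h ^ 2 ∧
      |(α 1 / T) / (1 - δ) - 1 / 2| ≤ M * h ^ 2 ∧
      |(α 3 / T) / (1 - δ) - 1 / 2| ≤ M * h ^ 2 := by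
  refine ⟨β * A * (K+B)^(β-1) / (4 * K^β), 1, one_pos, ?_⟩
  intro h hh hh1
  intro α T δ
  have hαpos : ∀ k, 0 < α k := by
    intro k
    have h1 : (0:ℝ) < K * h ^ 2 + D k h := by
      have := hDnn k h hh; positivity
    exact div_pos one_half_pos (Real.rpow_pos_of_pos h1 β)
  have hT : T = α 0 + α 1 + α 2 + α 3 := rfl
  have hδ : δ = (α 0 + α 2) / T := rfl
  have hTpos : 0 < T := by rw [hT]; have := hαpos 0; have := hαpos 1; have := hαpos 2; have := hαpos 3; linarith
  have h02pos : 0 < α 0 + α 2 := by have := hαpos 0; have := hαpos 2; linarith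
  have h13pos : 0 < α 1 + α 3 := by have := hαpos 1; have := hαpos 3; linarith
  have e1mδ : 1 - δ = (α 1 + α 3) / T := by
    rw [hδ, eq_div_iff hTpos.ne', sub_mul, div_mul_cancel₀ _ hTpos.ne', hT]; ring
  have eδ : ∀ a : ℝ, (a / T) / δ = a / (α 0 + α 2) := by
    intro a; rw [hδ]; field_simp
  have eδ' : ∀ a : ℝ, (a / T) / (1 - δ) = a / (α 1 + α 3) := by
    intro a; rw [e1mδ]; field_simp
  refine ⟨?_, ?_, ?_, ?_⟩
  · rw [eδ]
    exact aux_key K A B β h (D 0 h) (D 2 h) hK hβ hA hB hh (hDnn 0 h hh) (hDnn 2 h hh)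
      (h02 h hh hh1) (hall 0 h hh hh1) (hall 2 h hh hh1)
  · rw [eδ, add_comm (α 0) (α 2)]
    exact aux_key K A B β h (D 2 h) (D 0 h) hK hβ hA hB hh (hDnn 2 h hh) (hDnn 0 h hh)
      ((abs_sub_comm _ _).trans_le (h02 h hh hh1)) (hall 2 h hh hh1) (hall 0 h hh hh1)
  · rw [eδ']
    exact aux_key K A B β h (D 1 h) (D 3 h) hK hβ hA hB hh (hDnn 1 h hh) (hDnn 3 h hh)
      (h13 h hh hh1) (hall 1 h hh hh1) (hall 3 h hh hh1)
  · rw [eδ', add_comm (α 1) (α 3)]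
    exact aux_key K A B β h (D 3 h) (D 1 h) hK hβ hA hB hh (hDnn 3 h hh) (hDnn 1 h hh)
      ((abs_sub_comm _ _).trans_le (h13 h hh hh1)) (hall 3 h hh hh1) (hall 1 h hh hh1)
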